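/- With respect to the orthogonal decomposition ℂ^{B_n(T_q)} = ℂ_rad^{B_n(T_q)} ⊕ (ℂ^{B_n(T_q)} ⊖ ℂ_rad^{B_n(T_q)}), every truncated branching-Toeplitz matrix Γ_q^{(n)}[f] is block diagonal (both the radial subspace and its orthogonal complement are invariant), and consequently ‖Γ_q^{(n)}[f]‖ = max( ‖T_n(f)‖, ‖Γ_q^{(n)}[f] restricted to the orthogonal complement of the radial subspace‖ ). -/

import Mathlib

/-- Vertices of the rooted `q`-homogeneous tree, modelled as words over `Fin q`;
the root is the empty word and the children of `w` are the words `k :: w`. -/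
abbrev Vertex (q : ℕ) := List (Fin q)

/-- `σ` is an ancestor of `τ` (i.e. `σ ⪯ τ`): `τ = w ++ σ` for some word `w`. -/
def Anc {q : ℕ} (σ τ : Vertex q) : Prop := σ <:+ τ

/-- Two vertices are comparable (`(σ,τ) ∈ 𝒞`) if one is an ancestor of the other. -/
def Comp {q : ℕ} (σ τ : Vertex q) : Prop := σ <:+ τ ∨ τ <:+ σ

/-- Length of the longest common suffix, i.e. the generation of the last common
ancestor of the two vertices. -/
def lcs {q : ℕ} (σ τ : Vertex q) : ℕ :=
  ((σ.reverse.zip τ.reverse).takeWhile (fun p => decide (p.1 = p.2))).length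

/-- The graph distance on the rooted `q`-homogeneous tree. -/
def tdist {q : ℕ} (σ τ : Vertex q) : ℕ := (σ.length - lcs σ τ) + (τ.length - lcs σ τ)

instance {q : ℕ} (σ τ : Vertex q) : Decidable (Comp σ τ) :=
  inferInstanceAs (Decidable (σ <:+ τ ∨ τ <:+ σ))

/-- The branching-Toeplitz kernel
`Γ_q[f](σ₁,σ₂) = q^{-d(σ₁,σ₂)/2} · f̂(|σ₁|-|σ₂|) · 1_𝒞(σ₁,σ₂)` associated with a
formal Fourier series with coefficients `f̂ : ℤ → ℂ`. -/
noncomputable def btKer {q : ℕ} (f : ℤ → ℂ) (σ₁ σ₂ : Vertex q) : ℂ :=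
  if Comp σ₁ σ₂ then
    ((q : ℝ) ^ (-(tdist σ₁ σ₂ : ℝ) / 2) : ℝ) * f ((σ₁.length : ℤ) - σ₂.length) else 0

/-- The ball `B_n(T_q)` of vertices of generation at most `n`. -/
abbrev Ball (q n : ℕ) := {σ : Vertex q // σ.length ≤ n}

noncomputable instance (q n : ℕ) : Fintype (Ball q n) :=
  (List.finite_length_le (Fin q) n).fintype

/-- The truncated branching-Toeplitz matrix `Γ_q^{(n)}[f]` on `B_n(T_q)`. -/
noncomputable def btMat (q n : ℕ) (f : ℤ → ℂ) : Matrix (Ball q n) (Ball q n) ℂ :=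
  fun σ₁ σ₂ => btKer f σ₁.1 σ₂.1

/-- The standard Toeplitz matrix `T_n(f) = [f̂(k-l)]_{0 ≤ k,l ≤ n}`. -/
def toepMat (n : ℕ) (f : ℤ → ℂ) : Matrix (Fin (n + 1)) (Fin (n + 1)) ℂ :=
  fun k l => f ((k : ℤ) - (l : ℤ))

/-- The subspace of radial vectors in `ℂ^{B_n(T_q)}` (vectors constant on each
sphere `S_k`), as a submodule of the Euclidean space on `B_n(T_q)`. -/
def radSub (q n : ℕ) : Submodule ℂ (EuclideanSpace ℂ (Ball q n)) where
  carrier := {v | ∀ σ τ : Ball q n, σ.1.length = τ.1.length → v σ = v τ}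
  add_mem' := by
    intro a b ha hb σ τ h
    simp [ha σ τ h, hb σ τ h]
  zero_mem' := by intro σ τ h; simp
  smul_mem' := by
    intro c a ha σ τ h
    simp [ha σ τ h]


section Lemmas
variable {q : ℕ}

lemma zipTW_comm (a b : List (Fin q)) :
    ((a.zip b).takeWhile (fun p => decide (p.1 = p.2))).length
      = ((b.zip a).takeWhile (fun p => decide (p.1 = p.2))).length := by
  induction a generalizing b with
  | nil => cases b <;> simp
  | cons x a ih =>
    cases b with
    | nil => simp
    | cons y b =>
      simp only [List.zip_cons_cons, List.takeWhile_cons]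
      by_cases h : x = y
      · subst h; simp [ih]
      · simp [h, Ne.symm h]

lemma lcs_comm (σ τ : Vertex q) : lcs σ τ = lcs τ σ := zipTW_comm _ _

lemma tdist_comm (σ τ : Vertex q) : tdist σ τ = tdist τ σ := by
  unfold tdist; rw [lcs_comm]; omega

lemma zipTW_self_append (a c : List (Fin q)) :
    ((a.zip (a ++ c)).takeWhile (fun p => decide (p.1 = p.2))).length = a.length := by
  induction a with
  | nil => simp
  | cons x a ih => simpa [List.takeWhile_cons] using ih

lemma lcs_of_suffix {σ τ : Vertex q} (h : σ <:+ τ) : lcs σ τ = σ.length := by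
  obtain ⟨w, rfl⟩ := h
  unfold lcs
  rw [List.reverse_append]
  simpa using zipTW_self_append σ.reverse w.reverse

lemma tdist_of_suffix {σ τ : Vertex q} (h : σ <:+ τ) : tdist σ τ = τ.length - σ.length := by
  have h1 : σ.length ≤ τ.length := h.length_le
  unfold tdist
  rw [lcs_of_suffix h]
  omega

lemma suffix_eq_drop {σ τ : Vertex q} (h : σ <:+ τ) : τ.drop (τ.length - σ.length) = σ := by
  obtain ⟨w, rfl⟩ := h
  simp [List.length_append]

end Lemmas

section Main

variable {q n : ℕ}

lemma CLM_apply {m : Type*} [Fintype m] [DecidableEq m] (A : Matrix m m ℂ)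
    (v : EuclideanSpace ℂ m) (i : m) :
    Matrix.toEuclideanCLM (𝕜 := ℂ) A v i = ∑ j, A i j * v j := rfl

/-- weight -/
noncomputable def rw' (q l : ℕ) : ℂ := (((q : ℝ) ^ (-(l : ℝ) / 2) : ℝ) : ℂ)

lemma rw'_ne_zero (hq : 2 ≤ q) (l : ℕ) : rw' q l ≠ 0 := by
  have hqpos : (0:ℝ) < (q:ℝ) := by
    have : 0 < q := by omega
    exact_mod_cast this
  unfold rw'
  exact_mod_cast (Real.rpow_pos_of_pos hqpos _).ne'

lemma rw'_mul_anc (hq : 2 ≤ q) {l k : ℕ} (h : l ≤ k) : rw' q (k - l) * rw' q l = rw' q k := by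
  have hqpos : (0:ℝ) < (q:ℝ) := by
    have : 0 < q := by omega
    exact_mod_cast this
  unfold rw'
  rw [← Complex.ofReal_mul, ← Real.rpow_add hqpos]
  congr 2
  have : ((k - l : ℕ) : ℝ) = (k : ℝ) - l := by
    push_cast [Nat.cast_sub h]; ring
  rw [this]; ring

lemma rw'_mul_desc (hq : 2 ≤ q) (j k : ℕ) :
    (q : ℂ) ^ j * (rw' q j * rw' q (k + j)) = rw' q k := by
  have hqpos : (0:ℝ) < (q:ℝ) := by
    have : 0 < q := by omega
    exact_mod_cast this
  unfold rw'
  rw [← Complex.ofReal_mul, ← Real.rpow_add hqpos]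
  have : ((q:ℂ) ^ j) = ((((q:ℝ) ^ (j:ℝ)) : ℝ) : ℂ) := by
    rw [Real.rpow_natCast]; push_cast; ring
  rw [this, ← Complex.ofReal_mul, ← Real.rpow_add hqpos]
  congr 2
  push_cast
  ring

end Main

section Spheres
variable {q : ℕ}

/-- The sphere of radius `j` in the ball has `q ^ j` elements. -/
lemma card_sphere (m j : ℕ) (hj : j ≤ m) :
    (Finset.univ.filter (fun w : Ball q m => w.1.length = j)).card = q ^ j := by
  classical
  rw [← Fintype.card_subtype]
  have e : {w : Ball q m // w.1.length = j} ≃ List.Vector (Fin q) j :=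
    { toFun := fun w => ⟨w.1.1, w.2⟩
      invFun := fun v => ⟨⟨v.1, le_trans (le_of_eq v.2) hj⟩, v.2⟩
      left_inv := fun w => by ext; rfl
      right_inv := fun v => by ext; rfl }
  rw [Fintype.card_congr e, card_vector]
  simp

lemma sum_ball_length {M : Type*} [AddCommMonoid M] (m : ℕ) (g : ℕ → M) :
    ∑ w : Ball q m, g w.1.length = ∑ j ∈ Finset.range (m + 1), q ^ j • g j := by
  classical
  rw [← Finset.sum_fiberwise_of_maps_to (g := fun w : Ball q m => w.1.length)
    (t := Finset.range (m + 1)) (fun w _ => Finset.mem_range.2 (Nat.lt_succ_of_le w.2))]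
  refine Finset.sum_congr rfl fun j hj => ?_
  rw [Finset.sum_congr rfl (fun w hw => by
      rw [(Finset.mem_filter.1 hw).2]), Finset.sum_const,
    card_sphere m j (Nat.lt_succ_iff.1 (Finset.mem_range.1 hj))]

end Spheres

section Sums
variable {q n : ℕ}

/-- The ancestor of `σ` at generation `l`. -/
def ancVert (σ : Ball q n) (l : ℕ) : Ball q n :=
  ⟨σ.1.drop (σ.1.length - l), le_trans (by rw [List.length_drop]; omega) σ.2⟩

lemma ancVert_length (σ : Ball q n) {l : ℕ} (hl : l ≤ σ.1.length) :
    (ancVert σ l).1.length = l := by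
  simp [ancVert, List.length_drop]; omega

/-- The descendant `w ++ σ` of `σ`. -/
def descVert (σ : Ball q n) (w : Ball q (n - σ.1.length)) : Ball q n :=
  ⟨w.1 ++ σ.1, by
    rw [List.length_append]
    have h1 := w.2
    have h2 := σ.2
    omega⟩

lemma descVert_length (σ : Ball q n) (w : Ball q (n - σ.1.length)) :
    (descVert σ w).1.length = σ.1.length + w.1.length := by
  simp [descVert, List.length_append]; omega

lemma sum_anc (σ : Ball q n) (F : Ball q n → ℂ) :
    ∑ ρ ∈ Finset.univ.filter (fun ρ : Ball q n => ρ.1 <:+ σ.1), F ρ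
      = ∑ l ∈ Finset.range (σ.1.length + 1), F (ancVert σ l) := by
  refine Finset.sum_bij' (fun ρ _ => ρ.1.length) (fun l _ => ancVert σ l) ?_ ?_ ?_ ?_ ?_
  · intro ρ hρ
    have h := (Finset.mem_filter.1 hρ).2
    exact Finset.mem_range.2 (Nat.lt_succ_of_le h.length_le)
  · intro l _
    refine Finset.mem_filter.2 ⟨Finset.mem_univ _, ?_⟩
    exact List.drop_suffix _ _
  · intro ρ hρ
    have h := (Finset.mem_filter.1 hρ).2
    exact Subtype.ext (suffix_eq_drop h)
  · intro l hl
    exact ancVert_length σ (Nat.lt_succ_iff.1 (Finset.mem_range.1 hl))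
  · intro ρ hρ
    have h := (Finset.mem_filter.1 hρ).2
    congr 1
    exact (Subtype.ext (suffix_eq_drop h)).symm

lemma sum_desc (σ : Ball q n) (F : Ball q n → ℂ) :
    ∑ ρ ∈ Finset.univ.filter (fun ρ : Ball q n => σ.1 <:+ ρ.1), F ρ
      = ∑ w : Ball q (n - σ.1.length), F (descVert σ w) := by
  have take_mem : ∀ ρ : Ball q n, σ.1 <:+ ρ.1 →
      (ρ.1.take (ρ.1.length - σ.1.length)).length ≤ n - σ.1.length := by
    intro ρ h
    rw [List.length_take]
    have := ρ.2
    omega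
  have take_append : ∀ ρ : Ball q n, (h : σ.1 <:+ ρ.1) →
      ρ.1.take (ρ.1.length - σ.1.length) ++ σ.1 = ρ.1 := by
    intro ρ h
    obtain ⟨w, hw⟩ := h
    rw [← hw, List.length_append, Nat.add_sub_cancel, List.take_left]
  refine (Finset.sum_bij' (fun ρ hρ => (⟨ρ.1.take (ρ.1.length - σ.1.length),
      take_mem ρ (Finset.mem_filter.1 hρ).2⟩ : Ball q (n - σ.1.length)))
      (fun w _ => descVert σ w) ?_ ?_ ?_ ?_ ?_)
  · intro ρ _; exact Finset.mem_univ _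
  · intro w _
    exact Finset.mem_filter.2 ⟨Finset.mem_univ _, List.suffix_append _ _⟩
  · intro ρ hρ
    exact Subtype.ext (take_append ρ (Finset.mem_filter.1 hρ).2)
  · intro w _
    apply Subtype.ext
    show (descVert σ w).1.take _ = w.1
    rw [show (descVert σ w).1.length - σ.1.length = w.1.length by
      rw [descVert_length]; omega]
    exact List.take_left
  · intro ρ hρ
    congr 1
    exact (Subtype.ext (take_append ρ (Finset.mem_filter.1 hρ).2)).symm

lemma sum_split (a : ℕ → ℂ) {k n : ℕ} (hk : k ≤ n) :
    (∑ l ∈ Finset.range (k + 1), a l) + (∑ j ∈ Finset.range (n - k + 1), a (k + j)) - a k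
      = ∑ l ∈ Finset.range (n + 1), a l := by
  have h2 : ∑ j ∈ Finset.range (n - k + 1), a (k + j)
      = a k + ∑ i ∈ Finset.range (n - k), a (k + 1 + i) := by
    rw [Finset.sum_range_succ' (fun j => a (k + j))]
    simp only [Nat.add_zero]
    rw [add_comm]
    congr 1
    refine Finset.sum_congr rfl fun i _ => ?_
    congr 1
    omega
  have h3 : ∑ l ∈ Finset.range (n + 1), a l
      = (∑ l ∈ Finset.range (k + 1), a l) + ∑ i ∈ Finset.range (n - k), a (k + 1 + i) := by
    have hn : n + 1 = k + 1 + (n - k) := by omega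
    rw [hn, Finset.sum_range_add]
  rw [h2, h3]
  ring

end Sums

section Ker
variable {q n : ℕ}

lemma btKer_desc' (f : ℤ → ℂ) {σ τ : Vertex q} (h : σ <:+ τ) :
    btKer f σ τ = rw' q (τ.length - σ.length) * f ((σ.length : ℤ) - τ.length) := by
  unfold btKer
  rw [if_pos (show Comp σ τ from Or.inl h), tdist_of_suffix h]
  rfl

lemma btKer_anc' (f : ℤ → ℂ) {σ τ : Vertex q} (h : τ <:+ σ) :
    btKer f σ τ = rw' q (σ.length - τ.length) * f ((σ.length : ℤ) - τ.length) := by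
  unfold btKer
  rw [if_pos (show Comp σ τ from Or.inr h), tdist_comm, tdist_of_suffix h]
  rfl

lemma rw'_zero : rw' q 0 = 1 := by
  unfold rw'
  norm_num

lemma key_pointwise (hq : 2 ≤ q) (f : ℤ → ℂ) (c : ℕ → ℂ) (σ : Ball q n) :
    ∑ ρ : Ball q n, btMat q n f σ ρ * (rw' q ρ.1.length * c ρ.1.length)
      = rw' q σ.1.length *
          ∑ l ∈ Finset.range (n + 1), f ((σ.1.length : ℤ) - l) * c l := by
  classical
  set k := σ.1.length with hkdef
  have hk : k ≤ n := σ.2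
  set F : Ball q n → ℂ := fun ρ => btMat q n f σ ρ * (rw' q ρ.1.length * c ρ.1.length) with hF
  -- restrict to comparable vertices
  have h0 : ∑ ρ : Ball q n, F ρ
      = ∑ ρ ∈ Finset.univ.filter (fun ρ : Ball q n => Comp σ.1 ρ.1), F ρ := by
    refine (Finset.sum_filter_of_ne ?_).symm
    intro ρ _ hne
    by_contra hcomp
    apply hne
    simp [hF, btMat, btKer, hcomp]
  -- split into ancestors and descendants
  have hsplit : Finset.univ.filter (fun ρ : Ball q n => Comp σ.1 ρ.1)
      = (Finset.univ.filter (fun ρ : Ball q n => σ.1 <:+ ρ.1))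
        ∪ (Finset.univ.filter (fun ρ : Ball q n => ρ.1 <:+ σ.1)) := by
    rw [← Finset.filter_or]
    rfl
  have hinter : (Finset.univ.filter (fun ρ : Ball q n => σ.1 <:+ ρ.1))
      ∩ (Finset.univ.filter (fun ρ : Ball q n => ρ.1 <:+ σ.1)) = {σ} := by
    rw [← Finset.filter_and]
    ext ρ
    simp only [Finset.mem_filter, Finset.mem_univ, true_and, Finset.mem_singleton]
    constructor
    · rintro ⟨h1, h2⟩
      exact Subtype.ext (h2.eq_of_length_le h1.length_le)
    · rintro rfl
      exact ⟨List.suffix_refl _, List.suffix_refl _⟩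
  have hunion := Finset.sum_union_inter (s₁ := Finset.univ.filter
      (fun ρ : Ball q n => σ.1 <:+ ρ.1))
    (s₂ := Finset.univ.filter (fun ρ : Ball q n => ρ.1 <:+ σ.1)) (f := F)
  rw [hinter, Finset.sum_singleton] at hunion
  -- descendant sum
  have hdesc : ∑ ρ ∈ Finset.univ.filter (fun ρ : Ball q n => σ.1 <:+ ρ.1), F ρ
      = ∑ j ∈ Finset.range (n - k + 1), rw' q k * (f (-(j : ℤ)) * c (k + j)) := by
    rw [sum_desc σ F]
    set g : ℕ → ℂ := fun j => rw' q j * f (-(j : ℤ)) * (rw' q (k + j) * c (k + j)) with hg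
    have hFd : ∀ w : Ball q (n - k), F (descVert σ w) = g w.1.length := by
      intro w
      have hsuf : σ.1 <:+ (descVert σ w).1 := List.suffix_append _ _
      have hlen : (descVert σ w).1.length = k + w.1.length := descVert_length σ w
      simp only [hF, btMat, hg]
      rw [btKer_desc' f hsuf, hlen]
      have h1 : k + w.1.length - k = w.1.length := by omega
      have h2 : ((k : ℤ) - (k + w.1.length : ℕ)) = -(w.1.length : ℤ) := by push_cast; ring
      rw [h1, h2]
    rw [Finset.sum_congr rfl fun w _ => hFd w, sum_ball_length (n - k) g]
    refine Finset.sum_congr rfl fun j _ => ?_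
    simp only [hg]
    rw [nsmul_eq_mul]
    push_cast
    rw [← rw'_mul_desc hq j k]
    ring
  -- ancestor sum
  have hanc : ∑ ρ ∈ Finset.univ.filter (fun ρ : Ball q n => ρ.1 <:+ σ.1), F ρ
      = ∑ l ∈ Finset.range (k + 1), rw' q k * (f ((k : ℤ) - l) * c l) := by
    rw [sum_anc σ F]
    refine Finset.sum_congr rfl fun l hl => ?_
    have hlk : l ≤ k := Nat.lt_succ_iff.1 (Finset.mem_range.1 hl)
    have hsuf : (ancVert σ l).1 <:+ σ.1 := List.drop_suffix _ _
    have hlen : (ancVert σ l).1.length = l := ancVert_length σ hlk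
    simp only [hF, btMat]
    rw [btKer_anc' f hsuf, hlen, ← rw'_mul_anc hq hlk]
    ring
  -- center term
  have hcen : F σ = rw' q k * (f ((k : ℤ) - (k : ℤ)) * c k) := by
    simp only [hF, btMat]
    rw [btKer_desc' f (List.suffix_refl σ.1), Nat.sub_self, rw'_zero]
    ring
  -- combine
  have : ∑ ρ : Ball q n, F ρ
      = (∑ l ∈ Finset.range (k + 1), rw' q k * (f ((k : ℤ) - l) * c l))
        + (∑ j ∈ Finset.range (n - k + 1), rw' q k * (f (-(j : ℤ)) * c (k + j)))
        - rw' q k * (f ((k : ℤ) - (k : ℤ)) * c k) := by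
    rw [h0, hsplit, ← hdesc, ← hanc, ← hcen, eq_sub_iff_add_eq]
    linear_combination hunion
  rw [this]
  have hre : ∀ j : ℕ, rw' q k * (f (-(j:ℤ)) * c (k + j))
      = rw' q k * (f ((k:ℤ) - ((k + j : ℕ) : ℤ)) * c (k + j)) := by
    intro j
    congr 2
    push_cast
    ring_nf
  rw [Finset.sum_congr rfl fun j _ => hre j, ← Finset.mul_sum, ← Finset.mul_sum,
    ← sum_split (fun l => f ((k:ℤ) - l) * c l) hk]
  ring

end Ker

section Embed
variable {q n : ℕ}

lemma rw'_norm_sq (hq : 2 ≤ q) (j : ℕ) : (q:ℝ) ^ j * ‖rw' q j‖ ^ 2 = 1 := by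
  have hqpos : (0:ℝ) < (q:ℝ) := by
    have : 0 < q := by omega
    exact_mod_cast this
  have h1 : ‖rw' q j‖ = (q:ℝ) ^ (-(j:ℝ)/2) := by
    unfold rw'
    rw [Complex.norm_real, Real.norm_eq_abs, abs_of_pos (Real.rpow_pos_of_pos hqpos _)]
  rw [h1, sq, ← Real.rpow_natCast (q:ℝ) j, ← Real.rpow_add hqpos, ← Real.rpow_add hqpos,
    show ((j:ℝ) + (-(j:ℝ)/2 + -(j:ℝ)/2)) = 0 by ring, Real.rpow_zero]

/-- Extension of a vector indexed by `Fin (n+1)` to all of `ℕ`. -/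
noncomputable def ext' (n : ℕ) (y : EuclideanSpace ℂ (Fin (n+1))) : ℕ → ℂ :=
  fun l => if h : l < n + 1 then y ⟨l, h⟩ else 0

lemma ext'_apply (n : ℕ) (y : EuclideanSpace ℂ (Fin (n+1))) (l : Fin (n+1)) :
    ext' n y l.1 = y l := by
  simp [ext', l.2]

/-- The linear isometry embedding of `ℂ^{n+1}` onto the radial subspace. -/
noncomputable def Uemb (q n : ℕ) (hq : 2 ≤ q) :
    EuclideanSpace ℂ (Fin (n+1)) →ₗᵢ[ℂ] EuclideanSpace ℂ (Ball q n) where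
  toFun y := WithLp.toLp 2 (fun σ : Ball q n => rw' q σ.1.length * y ⟨σ.1.length, Nat.lt_succ_of_le σ.2⟩)
  map_add' y z := WithLp.ofLp_injective 2 <| funext fun σ => by
    show rw' q σ.1.length * (y _ + z _) = rw' q σ.1.length * y _ + rw' q σ.1.length * z _
    ring
  map_smul' a y := WithLp.ofLp_injective 2 <| funext fun σ => by
    show rw' q σ.1.length * (a * y _) = a * (rw' q σ.1.length * y _)
    ring
  norm_map' y := by
    rw [EuclideanSpace.norm_eq, EuclideanSpace.norm_eq]
    congr 1
    have hterm : ∀ σ : Ball q n,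
        ‖rw' q σ.1.length * y ⟨σ.1.length, Nat.lt_succ_of_le σ.2⟩‖ ^ 2
          = (fun j => ‖rw' q j * ext' n y j‖ ^ 2) σ.1.length := by
      intro σ
      simp only [ext']
      rw [dif_pos (Nat.lt_succ_of_le σ.2)]
    calc ∑ σ : Ball q n, ‖rw' q σ.1.length * y ⟨σ.1.length, Nat.lt_succ_of_le σ.2⟩‖ ^ 2
        = ∑ σ : Ball q n, (fun j => ‖rw' q j * ext' n y j‖ ^ 2) σ.1.length :=
          Finset.sum_congr rfl fun σ _ => hterm σ
      _ = ∑ j ∈ Finset.range (n+1), ‖ext' n y j‖ ^ 2 := by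
          rw [sum_ball_length n (fun j => ‖rw' q j * ext' n y j‖ ^ 2)]
          refine Finset.sum_congr rfl fun j _ => ?_
          rw [nsmul_eq_mul, norm_mul, mul_pow]
          push_cast
          rw [show (q:ℝ)^j * (‖rw' q j‖^2 * ‖ext' n y j‖^2)
              = ((q:ℝ)^j * ‖rw' q j‖^2) * ‖ext' n y j‖^2 by ring, rw'_norm_sq hq, one_mul]
      _ = ∑ i : Fin (n+1), ‖y i‖ ^ 2 := by
          rw [← Fin.sum_univ_eq_sum_range (fun j => ‖ext' n y j‖ ^ 2) (n+1)]
          exact Finset.sum_congr rfl fun i _ => by rw [ext'_apply]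

lemma Uemb_apply (hq : 2 ≤ q) (y : EuclideanSpace ℂ (Fin (n+1))) (σ : Ball q n) :
    Uemb q n hq y σ = rw' q σ.1.length * ext' n y σ.1.length := by
  show rw' q σ.1.length * y ⟨σ.1.length, Nat.lt_succ_of_le σ.2⟩ = _
  simp only [ext']
  rw [dif_pos (Nat.lt_succ_of_le σ.2)]

lemma Uemb_mem_radSub (hq : 2 ≤ q) (y : EuclideanSpace ℂ (Fin (n+1))) :
    Uemb q n hq y ∈ radSub q n := by
  intro σ τ h
  rw [Uemb_apply, Uemb_apply, h]

lemma radSub_sub_range (hq : 2 ≤ q) (v : EuclideanSpace ℂ (Ball q n)) (hv : v ∈ radSub q n) :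
    ∃ y : EuclideanSpace ℂ (Fin (n+1)), Uemb q n hq y = v := by
  have hq0 : 0 < q := by omega
  refine ⟨(WithLp.toLp 2 (fun l : Fin (n+1) =>
    (rw' q l.1)⁻¹ * v ⟨List.replicate l.1 ⟨0, hq0⟩, by simp [Nat.lt_succ_iff.1 l.2]⟩) :
      EuclideanSpace ℂ (Fin (n+1))), ?_⟩
  refine WithLp.ofLp_injective 2 (funext fun σ => ?_)
  show rw' q σ.1.length * ((rw' q σ.1.length)⁻¹ * v _) = v σ
  rw [← mul_assoc, mul_inv_cancel₀ (rw'_ne_zero hq _), one_mul]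
  exact hv _ σ (by simp)

lemma key_id (hq : 2 ≤ q) (f : ℤ → ℂ) (y : EuclideanSpace ℂ (Fin (n+1))) :
    Matrix.toEuclideanCLM (𝕜 := ℂ) (btMat q n f) (Uemb q n hq y)
      = Uemb q n hq (Matrix.toEuclideanCLM (𝕜 := ℂ) (toepMat n f) y) := by
  refine WithLp.ofLp_injective 2 (funext fun σ => ?_)
  rw [CLM_apply, Uemb_apply]
  have hL : ∑ ρ : Ball q n, btMat q n f σ ρ * Uemb q n hq y ρ
      = ∑ ρ : Ball q n, btMat q n f σ ρ * (rw' q ρ.1.length * ext' n y ρ.1.length) :=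
    Finset.sum_congr rfl fun ρ _ => by rw [Uemb_apply]
  rw [hL, key_pointwise hq f (ext' n y) σ]
  congr 1
  have h2 : ∀ l : Fin (n+1), toepMat n f ⟨σ.1.length, Nat.lt_succ_of_le σ.2⟩ l * y l
      = (fun l : ℕ => f ((σ.1.length : ℤ) - l) * ext' n y l) l.1 := by
    intro l
    show _ = f ((σ.1.length : ℤ) - (l.1 : ℤ)) * ext' n y l.1
    rw [ext'_apply]
    rfl
  rw [show ext' n (Matrix.toEuclideanCLM (𝕜 := ℂ) (toepMat n f) y) σ.1.length
      = Matrix.toEuclideanCLM (𝕜 := ℂ) (toepMat n f) y ⟨σ.1.length, Nat.lt_succ_of_le σ.2⟩ from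
        ext'_apply n _ ⟨σ.1.length, Nat.lt_succ_of_le σ.2⟩]
  rw [CLM_apply, Finset.sum_congr rfl fun l _ => h2 l,
    Fin.sum_univ_eq_sum_range (fun l => f ((σ.1.length : ℤ) - l) * ext' n y l) (n+1)]

lemma btMat_conjT (f : ℤ → ℂ) :
    (btMat q n f).conjTranspose = btMat q n (fun m => (starRingEnd ℂ) (f (-m))) := by
  ext σ τ
  show star (btKer f τ.1 σ.1) = btKer _ σ.1 τ.1
  unfold btKer
  by_cases h : Comp σ.1 τ.1
  · have h' : Comp τ.1 σ.1 := h.symm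
    rw [if_pos h, if_pos h']
    rw [star_mul']
    congr 1
    · rw [tdist_comm]
      exact Complex.conj_ofReal _
    · show star (f _) = (starRingEnd ℂ) (f (-((σ.1.length : ℤ) - τ.1.length)))
      rw [show -((σ.1.length : ℤ) - τ.1.length) = (τ.1.length : ℤ) - σ.1.length by ring]
      rfl
  · have h' : ¬ Comp τ.1 σ.1 := fun hc => h hc.symm
    rw [if_neg h', if_neg h, star_zero]

end Embed
/-- `Γ_q^{(n)}[f]` is block diagonal with respect to the
decomposition of `ℂ^{B_n(T_q)}` into the radial subspace and its orthogonal
complement, and `‖Γ_q^{(n)}[f]‖` is the maximum of `‖T_n(f)‖` and the norm of the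
restriction of `Γ_q^{(n)}[f]` to the orthogonal complement of the radial
subspace. -/
theorem btMat_block_diagonal (q n : ℕ) (hq : 2 ≤ q) (hn : 1 ≤ n) (f : ℤ → ℂ) :
    (∀ v ∈ radSub q n, Matrix.toEuclideanCLM (𝕜 := ℂ) (btMat q n f) v ∈ radSub q n) ∧
    (∀ v ∈ (radSub q n)ᗮ,
      Matrix.toEuclideanCLM (𝕜 := ℂ) (btMat q n f) v ∈ (radSub q n)ᗮ) ∧
    ‖Matrix.toEuclideanCLM (𝕜 := ℂ) (btMat q n f)‖ =
      max ‖Matrix.toEuclideanCLM (𝕜 := ℂ) (toepMat n f)‖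
        ‖(Matrix.toEuclideanCLM (𝕜 := ℂ) (btMat q n f)).comp
          ((radSub q n)ᗮ).subtypeL‖ := by
  classical
  have inv1 : ∀ (g : ℤ → ℂ), ∀ v ∈ radSub q n,
      Matrix.toEuclideanCLM (𝕜 := ℂ) (btMat q n g) v ∈ radSub q n := by
    intro g v hv
    obtain ⟨y, rfl⟩ := radSub_sub_range hq v hv
    rw [key_id hq g y]
    exact Uemb_mem_radSub hq _
  have hadj : ∀ (g : ℤ → ℂ),
      ContinuousLinearMap.adjoint (Matrix.toEuclideanCLM (𝕜 := ℂ) (btMat q n g))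
        = Matrix.toEuclideanCLM (𝕜 := ℂ)
            (btMat q n (fun m => (starRingEnd ℂ) (g (-m)))) := by
    intro g
    rw [← ContinuousLinearMap.star_eq_adjoint, ← map_star, Matrix.star_eq_conjTranspose,
      btMat_conjT]
  have inv2 : ∀ v ∈ (radSub q n)ᗮ,
      Matrix.toEuclideanCLM (𝕜 := ℂ) (btMat q n f) v ∈ (radSub q n)ᗮ := by
    intro v hv
    rw [Submodule.mem_orthogonal]
    intro u hu
    rw [← ContinuousLinearMap.adjoint_inner_left]
    refine (Submodule.mem_orthogonal _ _).1 hv _ ?_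
    rw [hadj f]
    exact inv1 _ u hu
  refine ⟨inv1 f, inv2, ?_⟩
  set A := Matrix.toEuclideanCLM (𝕜 := ℂ) (btMat q n f) with hA
  set T := Matrix.toEuclideanCLM (𝕜 := ℂ) (toepMat n f) with hT
  set UL := (Uemb q n hq).toContinuousLinearMap with hUL
  set B := A.comp ((radSub q n)ᗮ).subtypeL with hB
  have hAU : A.comp UL = UL.comp T := by
    refine ContinuousLinearMap.ext fun y => ?_
    simp only [ContinuousLinearMap.comp_apply]
    exact key_id hq f y
  have hTnorm : ‖A.comp UL‖ = ‖T‖ := by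
    rw [hAU]
    exact (Uemb q n hq).norm_toContinuousLinearMap_comp (g := T)
  apply le_antisymm
  · have hc0 : (0:ℝ) ≤ max ‖T‖ ‖B‖ := le_max_of_le_left (norm_nonneg _)
    apply ContinuousLinearMap.opNorm_le_bound _ hc0
    intro v
    set m : EuclideanSpace ℂ (Ball q n) := (((radSub q n).orthogonalProjectionOnto v : ↥(radSub q n)) : EuclideanSpace ℂ (Ball q n)) with hm'
    have hm : m ∈ radSub q n := SetLike.coe_mem _
    set w : EuclideanSpace ℂ (Ball q n) := v - m with hw'
    have hw : w ∈ (radSub q n)ᗮ := Submodule.sub_starProjection_mem_orthogonal (K := radSub q n) v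
    have hvmw : v = m + w := by rw [hw']; abel
    obtain ⟨y, hy⟩ := radSub_sub_range hq m hm
    have h1 : ‖A m‖ ≤ ‖T‖ * ‖m‖ := by
      have hAm : A m = UL (T y) := by
        rw [← hy]
        exact key_id hq f y
      have hyn : ‖y‖ = ‖m‖ := by rw [← hy]; exact ((Uemb q n hq).norm_map y).symm
      rw [hAm]
      calc ‖UL (T y)‖ = ‖T y‖ := (Uemb q n hq).norm_map (T y)
        _ ≤ ‖T‖ * ‖y‖ := T.le_opNorm y
        _ = ‖T‖ * ‖m‖ := by rw [hyn]
    have h2 : ‖A w‖ ≤ ‖B‖ * ‖w‖ := by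
      have : A w = B ⟨w, hw⟩ := rfl
      rw [this]
      exact (B.le_opNorm _).trans (le_of_eq rfl)
    have hinner : inner (𝕜 := ℂ) (A m) (A w) = 0 :=
      Submodule.inner_right_of_mem_orthogonal (inv1 f m hm) (inv2 w hw)
    have hinner2 : inner (𝕜 := ℂ) m w = 0 :=
      Submodule.inner_right_of_mem_orthogonal hm hw
    have hp1 : ‖A v‖^2 = ‖A m‖^2 + ‖A w‖^2 := by
      rw [hvmw, map_add, sq, sq, sq]
      exact norm_add_sq_eq_norm_sq_add_norm_sq_of_inner_eq_zero _ _ hinner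
    have hp2 : ‖v‖^2 = ‖m‖^2 + ‖w‖^2 := by
      rw [hvmw, sq, sq, sq]
      exact norm_add_sq_eq_norm_sq_add_norm_sq_of_inner_eq_zero _ _ hinner2
    have hsq : ‖A v‖^2 ≤ (max ‖T‖ ‖B‖ * ‖v‖)^2 := by
      rw [hp1]
      have e1 : ‖A m‖^2 ≤ (‖T‖ * ‖m‖)^2 :=
        pow_le_pow_left₀ (norm_nonneg _) h1 2
      have e2 : ‖A w‖^2 ≤ (‖B‖ * ‖w‖)^2 :=
        pow_le_pow_left₀ (norm_nonneg _) h2 2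
      have e3 : (‖T‖ * ‖m‖)^2 ≤ (max ‖T‖ ‖B‖)^2 * ‖m‖^2 := by
        rw [mul_pow]
        gcongr
        exact le_max_left _ _
      have e4 : (‖B‖ * ‖w‖)^2 ≤ (max ‖T‖ ‖B‖)^2 * ‖w‖^2 := by
        rw [mul_pow]
        gcongr
        exact le_max_right _ _
      calc ‖A m‖^2 + ‖A w‖^2 ≤ (max ‖T‖ ‖B‖)^2 * ‖m‖^2 + (max ‖T‖ ‖B‖)^2 * ‖w‖^2 := by
            exact add_le_add (e1.trans e3) (e2.trans e4)
        _ = (max ‖T‖ ‖B‖)^2 * (‖m‖^2 + ‖w‖^2) := by ring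
        _ = (max ‖T‖ ‖B‖ * ‖v‖)^2 := by rw [← hp2]; ring
    have := (pow_le_pow_iff_left₀ (norm_nonneg (A v))
      (mul_nonneg hc0 (norm_nonneg v)) (two_ne_zero)).1 hsq
    exact this
  · apply max_le
    · rw [← hTnorm]
      calc ‖A.comp UL‖ ≤ ‖A‖ * ‖UL‖ := ContinuousLinearMap.opNorm_comp_le _ _
        _ ≤ ‖A‖ * 1 := by
            gcongr
            exact (Uemb q n hq).norm_toContinuousLinearMap_le
        _ = ‖A‖ := mul_one _
    · calc ‖B‖ ≤ ‖A‖ * ‖((radSub q n)ᗮ).subtypeL‖ := ContinuousLinearMap.opNorm_comp_le _ _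
        _ ≤ ‖A‖ * 1 := by
            gcongr
            exact Submodule.norm_subtypeL_le _
        _ = ‖A‖ := mul_one _
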